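/- Let 1 ≤ n ≤ d and suppose D_n(𝒞) ≠ 0. Then the j-th entries of the solution vectors Φ_n^+ and Φ_n^- coincide for every 1 ≤ j ≤ 2d, and are negatives of each other for every 2d+1 ≤ j ≤ 4d. -/

import Mathlib

open Complex Matrix

noncomputable section

def Lv (d : ℕ) : ℤ := if Even d then d / 2 else d

def rv (d : ℕ) : ℤ := if Even d then 1 else 2

/-- The coefficient of `T^k` in `f_𝒞(T) = Σ_{j=0}^d C_{-(L-rj)} T^{d-j}` is `C_{L-rk}`. -/
def coeffC (d : ℕ) (C : ℤ → ℂ) : ℕ → ℂ := fun k => C (Lv d - rv d * k)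

def SCM (a : ℕ → ℂ) (d n : ℕ) : Matrix (Fin n) (Fin n) ℂ :=
  Matrix.of fun j k => if (j : ℕ) ≤ (k : ℕ) then a (d - ((k : ℕ) - (j : ℕ))) else 0

def SCN (a : ℕ → ℂ) (n : ℕ) : Matrix (Fin n) (Fin n) ℂ :=
  Matrix.of fun j k => if (j : ℕ) ≤ (k : ℕ) then a ((k : ℕ) - (j : ℕ)) else 0

def SCL (a : ℕ → ℂ) (d n : ℕ) (ε : ℂ) : Matrix (Fin n ⊕ Fin n) (Fin n ⊕ Fin n) ℂ :=
  Matrix.fromBlocks (SCM a d n)ᵀ (ε • (SCN a n)ᴴ) (ε • SCN a n)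
    ((SCM a d n).map (starRingEnd ℂ))

/-- The Schur–Cohn determinant `D_n(𝒞)`, with `D_0(𝒞) = 1`. -/
def SCD (d : ℕ) (C : ℤ → ℂ) (n : ℕ) : ℂ :=
  if n = 0 then 1 else (SCL (coeffC d C) d n 1).det

/-- The `2d × 2d` lower-triangular Toeplitz matrix `𝔢₀(𝒞)` with `(j,k)`-entry
`C_{−L+r(j−k)}` when `0 ≤ j−k ≤ d` and `0` otherwise. -/
def e0mat (d : ℕ) (C : ℤ → ℂ) : Matrix (Fin (2 * d)) (Fin (2 * d)) ℂ :=
  Matrix.of fun j k =>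
    if (k : ℕ) ≤ (j : ℕ) ∧ (j : ℕ) - (k : ℕ) ≤ d then
      C (-(Lv d) + rv d * ((j : ℕ) - (k : ℕ) : ℕ)) else 0

/-- The `2d × 2d` matrix `𝔢_{1,n}(𝒞)` whose only nonzero entries are the
`(m+j, d+m)`-entries (1-based), equal to `C_{L−rj}`, for `1 ≤ m ≤ n`, `0 ≤ j ≤ d`. -/
def e1mat (d n : ℕ) (C : ℤ → ℂ) : Matrix (Fin (2 * d)) (Fin (2 * d)) ℂ :=
  Matrix.of fun j k =>
    if d ≤ (k : ℕ) ∧ (k : ℕ) + 1 ≤ d + n ∧ (k : ℕ) ≤ (j : ℕ) + d ∧ (j : ℕ) ≤ (k : ℕ) then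
      C (Lv d - rv d * ((j : ℤ) - (k : ℤ) + d)) else 0

/-- The `2d × 2d` matrix `𝔢_{2,n}(𝒞)` whose only nonzero entries are the
`(d−n+m+j, 2d−n+m)`-entries (1-based), equal to `C_{L−rj}`, for `1 ≤ m ≤ n`, `0 ≤ j ≤ d`. -/
def e2mat (d n : ℕ) (C : ℤ → ℂ) : Matrix (Fin (2 * d)) (Fin (2 * d)) ℂ :=
  Matrix.of fun j k =>
    if 2 * d ≤ (k : ℕ) + n ∧ (k : ℕ) ≤ (j : ℕ) + d ∧ (j : ℕ) ≤ (k : ℕ) then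
      C (Lv d - rv d * ((j : ℤ) - (k : ℤ) + d)) else 0

/-- The `2d × 2d` anti-diagonal matrix `J_{2d}`. -/
def Jmat (d : ℕ) : Matrix (Fin (2 * d)) (Fin (2 * d)) ℂ :=
  Matrix.of fun j k => if (j : ℕ) + (k : ℕ) + 1 = 2 * d then 1 else 0

/-- The `8d × 8d` matrix `𝔈₀(𝒞) = blockdiag(𝔢₀, 𝔢₀, ᵗconj(𝔢₀), ᵗconj(𝔢₀))`, indexed by
`Fin 4 × Fin (2d)` (the first coordinate is the block index). -/
def bigE0 (d : ℕ) (C : ℤ → ℂ) :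
    Matrix (Fin 4 × Fin (2 * d)) (Fin 4 × Fin (2 * d)) ℂ :=
  Matrix.of fun p q =>
    if p.1 = q.1 then
      (if (p.1 : ℕ) ≤ 1 then e0mat d C p.2 q.2 else (e0mat d C)ᴴ p.2 q.2)
    else 0

/-- The `8d × 8d` matrix `𝔈ₙ^♯(𝒞)` with `(1,3)`-block `conj(𝔢_{2,n})`, `(2,4)`-block
`conj(𝔢_{1,n})`, `(3,1)`-block `J_{2d}·𝔢_{1,n}·J_{2d}`, `(4,2)`-block `J_{2d}·𝔢_{2,n}·J_{2d}`,
and all other blocks zero. -/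
def bigEsharp (d n : ℕ) (C : ℤ → ℂ) :
    Matrix (Fin 4 × Fin (2 * d)) (Fin 4 × Fin (2 * d)) ℂ :=
  Matrix.of fun p q =>
    if p.1 = 0 ∧ q.1 = 2 then ((e2mat d n C).map (starRingEnd ℂ)) p.2 q.2
    else if p.1 = 1 ∧ q.1 = 3 then ((e1mat d n C).map (starRingEnd ℂ)) p.2 q.2
    else if p.1 = 2 ∧ q.1 = 0 then (Jmat d * e1mat d n C * Jmat d) p.2 q.2
    else if p.1 = 3 ∧ q.1 = 1 then (Jmat d * e2mat d n C * Jmat d) p.2 q.2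
    else 0

/-- The vector `χ ∈ ℂ^{8d}` with first and last entries `1` and all other entries `0`. -/
def chiVec (d : ℕ) : Fin 4 × Fin (2 * d) → ℂ := fun p =>
  if (p.1 = 0 ∧ (p.2 : ℕ) = 0) ∨ (p.1 = 3 ∧ (p.2 : ℕ) + 1 = 2 * d) then 1 else 0

/-- The `8d × 8d` matrix `𝔍 = [[0, I_{4d}],[I_{4d}, 0]]` (swapping blocks `0 ↔ 2`, `1 ↔ 3`). -/
def bigJ (d : ℕ) : Matrix (Fin 4 × Fin (2 * d)) (Fin 4 × Fin (2 * d)) ℂ :=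
  Matrix.of fun p q => if ((p.1 : ℕ) + 2) % 4 = (q.1 : ℕ) ∧ p.2 = q.2 then 1 else 0

lemma kernelA (d n : ℕ) (hd : 0 < d) (hn1 : 1 ≤ n) (hnd : n ≤ d)
    (a : ℕ → ℂ) (had : a d ≠ 0)
    (hdet : (SCL a d n 1).det ≠ 0)
    (u v : ℕ → ℂ)
    (H1 : ∀ j, j < 2*d → ∑ k ∈ Finset.range (2*d),
        (if k ≤ j ∧ j ≤ k + d then a (d - (j-k)) else 0) * u k
      = ∑ k ∈ Finset.range (2*d),
        (if 2*d ≤ k + n ∧ k ≤ j + d ∧ j ≤ k then (starRingEnd ℂ) (a (d - (k-j))) else 0) * v k)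
    (H2 : ∀ j, j < 2*d → ∑ k ∈ Finset.range (2*d),
        (if j ≤ k ∧ k ≤ j + d then (starRingEnd ℂ) (a (d - (k-j))) else 0) * v k
      = ∑ k ∈ Finset.range (2*d),
        (if d ≤ k + n ∧ k < d ∧ k ≤ j ∧ j ≤ k + d then a (d - (j-k)) else 0) * u k) :
    ∀ k, k < 2*d → u k = 0 ∧ v k = 0 := by
  have stepA : ∀ k, k < d - n → u k = 0 := by
    intro k
    induction k using Nat.strong_induction_on with
    | _ k ih =>
      intro hk
      have hk2 : k < 2*d := by omega
      have h1 := H1 k hk2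
      have hR : ∑ k' ∈ Finset.range (2*d),
          (if 2*d ≤ k' + n ∧ k' ≤ k + d ∧ k ≤ k' then (starRingEnd ℂ) (a (d - (k'-k))) else 0) * v k' = 0 :=
        Finset.sum_eq_zero fun k' _ => by rw [if_neg (by omega), zero_mul]
      have hL : ∑ k' ∈ Finset.range (2*d),
          (if k' ≤ k ∧ k ≤ k' + d then a (d - (k-k')) else 0) * u k' = a d * u k := by
        rw [Finset.sum_eq_single k]
        · rw [if_pos ⟨le_refl _, by omega⟩, Nat.sub_self, Nat.sub_zero]
        · intro k' _ hne
          rcases Nat.lt_or_ge k' k with h | h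
          · rw [ih k' h (by omega), mul_zero]
          · rw [if_neg (by omega), zero_mul]
        · intro h; exact absurd (Finset.mem_range.mpr hk2) h
      rw [hL, hR] at h1
      exact (mul_eq_zero.mp h1).resolve_left had
  have hz : (SCL a d n 1).mulVec
      (Sum.elim (fun t : Fin n => u (d - n + (t:ℕ))) (fun t : Fin n => -v (2*d - n + (t:ℕ)))) = 0 := by
    funext i
    rw [Pi.zero_apply]
    cases i with
    | inl j =>
      have hj := j.isLt
      have hA := H1 (d - n + (j:ℕ)) (by omega)
      have eL : ∑ k ∈ Finset.range (2*d),
            (if k ≤ d-n+(j:ℕ) ∧ d-n+(j:ℕ) ≤ k + d then a (d - (d-n+(j:ℕ)-k)) else 0) * u k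
          = ∑ k ∈ Finset.range n, (if k ≤ (j:ℕ) then a (d - ((j:ℕ)-k)) else 0) * u (d-n+k) := by
        have hsub : Finset.Ico (d-n) d ⊆ Finset.range (2*d) := by
          intro x hx; rw [Finset.mem_Ico] at hx; exact Finset.mem_range.mpr (by omega)
        have hzero : ∀ x ∈ Finset.range (2*d), x ∉ Finset.Ico (d-n) d →
            (if x ≤ d-n+(j:ℕ) ∧ d-n+(j:ℕ) ≤ x + d then a (d - (d-n+(j:ℕ)-x)) else 0) * u x = 0 := by
          intro x hx hnx
          rw [Finset.mem_range] at hx; rw [Finset.mem_Ico] at hnx; push_neg at hnx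
          rcases Nat.lt_or_ge x (d-n) with h | h
          · rw [stepA x h, mul_zero]
          · rw [if_neg (by omega), zero_mul]
        rw [← Finset.sum_subset hsub hzero, Finset.sum_Ico_eq_sum_range,
          show d - (d-n) = n by omega]
        refine Finset.sum_congr rfl fun k hk => ?_
        rw [Finset.mem_range] at hk
        by_cases h : k ≤ (j:ℕ)
        · rw [if_pos (by omega), if_pos h, show d-n+(j:ℕ) - (d-n+k) = (j:ℕ)-k by omega]
        · rw [if_neg (by omega), if_neg h]
      have eR : ∑ k ∈ Finset.range (2*d),
            (if 2*d ≤ k + n ∧ k ≤ d-n+(j:ℕ) + d ∧ d-n+(j:ℕ) ≤ k then (starRingEnd ℂ) (a (d - (k-(d-n+(j:ℕ))))) else 0) * v k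
          = ∑ k ∈ Finset.range n, (if k ≤ (j:ℕ) then (starRingEnd ℂ) (a ((j:ℕ)-k)) else 0) * v (2*d-n+k) := by
        have hsub : Finset.Ico (2*d-n) (2*d) ⊆ Finset.range (2*d) := by
          intro x hx; rw [Finset.mem_Ico] at hx; exact Finset.mem_range.mpr (by omega)
        have hzero : ∀ x ∈ Finset.range (2*d), x ∉ Finset.Ico (2*d-n) (2*d) →
            (if 2*d ≤ x + n ∧ x ≤ d-n+(j:ℕ) + d ∧ d-n+(j:ℕ) ≤ x then (starRingEnd ℂ) (a (d - (x-(d-n+(j:ℕ))))) else 0) * v x = 0 := by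
          intro x hx hnx
          rw [Finset.mem_range] at hx; rw [Finset.mem_Ico] at hnx; push_neg at hnx
          rw [if_neg (by omega), zero_mul]
        rw [← Finset.sum_subset hsub hzero, Finset.sum_Ico_eq_sum_range,
          show 2*d - (2*d-n) = n by omega]
        refine Finset.sum_congr rfl fun k hk => ?_
        rw [Finset.mem_range] at hk
        by_cases h : k ≤ (j:ℕ)
        · rw [if_pos (by omega), if_pos h, show 2*d-n+k - (d-n+(j:ℕ)) = d + k - (j:ℕ) by omega,
            show d - (d + k - (j:ℕ)) = (j:ℕ)-k by omega]
        · rw [if_neg (by omega), if_neg h]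
      rw [eL, eR] at hA
      simp only [Matrix.mulVec, dotProduct, Fintype.sum_sum_type, SCL,
        Matrix.fromBlocks_apply₁₁, Matrix.fromBlocks_apply₁₂, Matrix.transpose_apply,
        Matrix.smul_apply, Matrix.conjTranspose_apply, Matrix.map_apply, SCM, SCN,
        Matrix.of_apply, Sum.elim_inl, Sum.elim_inr, one_smul, smul_eq_mul,
        apply_ite (star : ℂ → ℂ), star_zero]
      have h1 : ∑ x : Fin n, (if (x:ℕ) ≤ (j:ℕ) then a (d - ((j:ℕ) - (x:ℕ))) else 0) * u (d - n + (x:ℕ))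
          = ∑ k ∈ Finset.range n, (if k ≤ (j:ℕ) then a (d - ((j:ℕ)-k)) else 0) * u (d-n+k) :=
        Fin.sum_univ_eq_sum_range (fun k => (if k ≤ (j:ℕ) then a (d - ((j:ℕ)-k)) else 0) * u (d-n+k)) n
      have h2 : ∑ x : Fin n, (if (x:ℕ) ≤ (j:ℕ) then star (a ((j:ℕ) - (x:ℕ))) else 0) * -v (2*d - n + (x:ℕ))
          = -∑ k ∈ Finset.range n, (if k ≤ (j:ℕ) then (starRingEnd ℂ) (a ((j:ℕ)-k)) else 0) * v (2*d-n+k) := by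
        rw [← Finset.sum_neg_distrib]
        refine (Fin.sum_univ_eq_sum_range (fun k => -((if k ≤ (j:ℕ) then (starRingEnd ℂ) (a ((j:ℕ)-k)) else 0) * v (2*d-n+k))) n).symm ▸ ?_
        refine Finset.sum_congr rfl fun x _ => ?_
        rw [mul_neg, starRingEnd_apply]
      rw [h1, h2, hA, add_neg_cancel]
    | inr j =>
      have hj := j.isLt
      have hB := H2 (2*d-n+(j:ℕ)) (by omega)
      have eL : ∑ k ∈ Finset.range (2*d),
            (if 2*d-n+(j:ℕ) ≤ k ∧ k ≤ 2*d-n+(j:ℕ) + d then (starRingEnd ℂ) (a (d - (k-(2*d-n+(j:ℕ))))) else 0) * v k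
          = ∑ k ∈ Finset.range n, (if (j:ℕ) ≤ k then (starRingEnd ℂ) (a (d - (k-(j:ℕ)))) else 0) * v (2*d-n+k) := by
        have hsub : Finset.Ico (2*d-n) (2*d) ⊆ Finset.range (2*d) := by
          intro x hx; rw [Finset.mem_Ico] at hx; exact Finset.mem_range.mpr (by omega)
        have hzero : ∀ x ∈ Finset.range (2*d), x ∉ Finset.Ico (2*d-n) (2*d) →
            (if 2*d-n+(j:ℕ) ≤ x ∧ x ≤ 2*d-n+(j:ℕ) + d then (starRingEnd ℂ) (a (d - (x-(2*d-n+(j:ℕ))))) else 0) * v x = 0 := by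
          intro x hx hnx
          rw [Finset.mem_range] at hx; rw [Finset.mem_Ico] at hnx; push_neg at hnx
          rw [if_neg (by omega), zero_mul]
        rw [← Finset.sum_subset hsub hzero, Finset.sum_Ico_eq_sum_range,
          show 2*d - (2*d-n) = n by omega]
        refine Finset.sum_congr rfl fun k hk => ?_
        rw [Finset.mem_range] at hk
        by_cases h : (j:ℕ) ≤ k
        · rw [if_pos (by omega), if_pos h, show 2*d-n+k - (2*d-n+(j:ℕ)) = k-(j:ℕ) by omega]
        · rw [if_neg (by omega), if_neg h]
      have eR : ∑ k ∈ Finset.range (2*d),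
            (if d ≤ k + n ∧ k < d ∧ k ≤ 2*d-n+(j:ℕ) ∧ 2*d-n+(j:ℕ) ≤ k + d then a (d - (2*d-n+(j:ℕ)-k)) else 0) * u k
          = ∑ k ∈ Finset.range n, (if (j:ℕ) ≤ k then a (k-(j:ℕ)) else 0) * u (d-n+k) := by
        have hsub : Finset.Ico (d-n) d ⊆ Finset.range (2*d) := by
          intro x hx; rw [Finset.mem_Ico] at hx; exact Finset.mem_range.mpr (by omega)
        have hzero : ∀ x ∈ Finset.range (2*d), x ∉ Finset.Ico (d-n) d →
            (if d ≤ x + n ∧ x < d ∧ x ≤ 2*d-n+(j:ℕ) ∧ 2*d-n+(j:ℕ) ≤ x + d then a (d - (2*d-n+(j:ℕ)-x)) else 0) * u x = 0 := by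
          intro x hx hnx
          rw [Finset.mem_range] at hx; rw [Finset.mem_Ico] at hnx; push_neg at hnx
          rw [if_neg (by omega), zero_mul]
        rw [← Finset.sum_subset hsub hzero, Finset.sum_Ico_eq_sum_range,
          show d - (d-n) = n by omega]
        refine Finset.sum_congr rfl fun k hk => ?_
        rw [Finset.mem_range] at hk
        by_cases h : (j:ℕ) ≤ k
        · rw [if_pos (by omega), if_pos h, show 2*d-n+(j:ℕ) - (d-n+k) = d + (j:ℕ) - k by omega,
            show d - (d + (j:ℕ) - k) = k - (j:ℕ) by omega]
        · rw [if_neg (by omega), if_neg h]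
      rw [eL, eR] at hB
      simp only [Matrix.mulVec, dotProduct, Fintype.sum_sum_type, SCL,
        Matrix.fromBlocks_apply₂₁, Matrix.fromBlocks_apply₂₂, Matrix.transpose_apply,
        Matrix.smul_apply, Matrix.conjTranspose_apply, Matrix.map_apply, SCM, SCN,
        Matrix.of_apply, Sum.elim_inl, Sum.elim_inr, one_smul, smul_eq_mul,
        apply_ite (starRingEnd ℂ), map_zero]
      have h1 : ∑ x : Fin n, (if (j:ℕ) ≤ (x:ℕ) then a ((x:ℕ) - (j:ℕ)) else 0) * u (d - n + (x:ℕ))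
          = ∑ k ∈ Finset.range n, (if (j:ℕ) ≤ k then a (k-(j:ℕ)) else 0) * u (d-n+k) :=
        Fin.sum_univ_eq_sum_range (fun k => (if (j:ℕ) ≤ k then a (k-(j:ℕ)) else 0) * u (d-n+k)) n
      have h2 : ∑ x : Fin n, (if (j:ℕ) ≤ (x:ℕ) then (starRingEnd ℂ) (a (d - ((x:ℕ)-(j:ℕ)))) else 0) * -v (2*d - n + (x:ℕ))
          = -∑ k ∈ Finset.range n, (if (j:ℕ) ≤ k then (starRingEnd ℂ) (a (d - (k-(j:ℕ)))) else 0) * v (2*d-n+k) := by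
        rw [← Finset.sum_neg_distrib]
        refine (Fin.sum_univ_eq_sum_range (fun k => -((if (j:ℕ) ≤ k then (starRingEnd ℂ) (a (d - (k-(j:ℕ)))) else 0) * v (2*d-n+k))) n).symm ▸ ?_
        exact Finset.sum_congr rfl fun x _ => (mul_neg _ _)
      rw [h1, h2, ← hB, add_neg_cancel]
  have hz0 := Matrix.eq_zero_of_mulVec_eq_zero hdet hz
  have hx : ∀ t, t < n → u (d - n + t) = 0 := by
    intro t ht
    have := congrFun hz0 (Sum.inl ⟨t, ht⟩)
    simp only [Sum.elim_inl, Pi.zero_apply] at this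
    exact this
  have hy : ∀ k, 2*d - n ≤ k → k < 2*d → v k = 0 := by
    intro k h1 h2
    have := congrFun hz0 (Sum.inr ⟨k - (2*d-n), by omega⟩)
    simp only [Sum.elim_inr, Pi.zero_apply, neg_eq_zero] at this
    rwa [show 2*d-n+(k-(2*d-n)) = k by omega] at this
  have hu : ∀ k, k < 2*d → u k = 0 := by
    intro k
    induction k using Nat.strong_induction_on with
    | _ k ih =>
      intro hk2
      have h1 := H1 k hk2
      have hR : ∑ k' ∈ Finset.range (2*d),
          (if 2*d ≤ k' + n ∧ k' ≤ k + d ∧ k ≤ k' then (starRingEnd ℂ) (a (d - (k'-k))) else 0) * v k' = 0 :=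
        Finset.sum_eq_zero fun k' hk' => by
          by_cases hc : 2*d ≤ k' + n ∧ k' ≤ k + d ∧ k ≤ k'
          · rw [hy k' (by omega) (Finset.mem_range.mp hk'), mul_zero]
          · rw [if_neg hc, zero_mul]
      have hL : ∑ k' ∈ Finset.range (2*d),
          (if k' ≤ k ∧ k ≤ k' + d then a (d - (k-k')) else 0) * u k' = a d * u k := by
        rw [Finset.sum_eq_single k]
        · rw [if_pos ⟨le_refl _, by omega⟩, Nat.sub_self, Nat.sub_zero]
        · intro k' hk' hne
          rcases Nat.lt_or_ge k' k with h | h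
          · rw [ih k' h (Finset.mem_range.mp hk'), mul_zero]
          · rw [if_neg (by omega), zero_mul]
        · intro h; exact absurd (Finset.mem_range.mpr hk2) h
      rw [hL, hR] at h1
      exact (mul_eq_zero.mp h1).resolve_left had
  have hstar : (starRingEnd ℂ) (a d) ≠ 0 := fun h => had (by
    have := congrArg (starRingEnd ℂ) h
    rwa [Complex.conj_conj, map_zero] at this)
  have hv : ∀ m k, k < 2*d → 2*d ≤ k + m → v k = 0 := by
    intro m
    induction m with
    | zero => intro k h1 h2; omega
    | succ m ihm =>
      intro k hk h2
      have h2' := H2 k hk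
      have hR : ∑ k' ∈ Finset.range (2*d),
          (if d ≤ k' + n ∧ k' < d ∧ k' ≤ k ∧ k ≤ k' + d then a (d - (k-k')) else 0) * u k' = 0 :=
        Finset.sum_eq_zero fun k' hk' => by
          rw [hu k' (Finset.mem_range.mp hk'), mul_zero]
      have hL : ∑ k' ∈ Finset.range (2*d),
          (if k ≤ k' ∧ k' ≤ k + d then (starRingEnd ℂ) (a (d - (k'-k))) else 0) * v k'
          = (starRingEnd ℂ) (a d) * v k := by
        rw [Finset.sum_eq_single k]
        · rw [if_pos ⟨le_refl _, by omega⟩, Nat.sub_self, Nat.sub_zero]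
        · intro k' hk' hne
          rcases Nat.lt_or_ge k k' with h | h
          · rw [ihm k' (Finset.mem_range.mp hk') (by omega), mul_zero]
          · rw [if_neg (by omega), zero_mul]
        · intro h; exact absurd (Finset.mem_range.mpr hk) h
      rw [hL, hR] at h2'
      exact (mul_eq_zero.mp h2').resolve_left hstar
  intro k hk
  exact ⟨hu k hk, hv (2*d) k hk (by omega)⟩

lemma kernelB (d n : ℕ) (hd : 0 < d) (hn1 : 1 ≤ n) (hnd : n ≤ d)
    (a : ℕ → ℂ) (had : a d ≠ 0)
    (hdet : (SCL a d n 1).det ≠ 0)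
    (u v : ℕ → ℂ)
    (H1 : ∀ j, j < 2*d → ∑ k ∈ Finset.range (2*d),
        (if k ≤ j ∧ j ≤ k + d then a (d - (j-k)) else 0) * u k
      = ∑ k ∈ Finset.range (2*d),
        (if d ≤ k ∧ k < d + n ∧ k ≤ j + d ∧ j ≤ k then (starRingEnd ℂ) (a (d - (k-j))) else 0) * v k)
    (H2 : ∀ j, j < 2*d → ∑ k ∈ Finset.range (2*d),
        (if j ≤ k ∧ k ≤ j + d then (starRingEnd ℂ) (a (d - (k-j))) else 0) * v k
      = ∑ k ∈ Finset.range (2*d),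
        (if k < n ∧ k ≤ j ∧ j ≤ k + d then a (d - (j-k)) else 0) * u k) :
    ∀ k, k < 2*d → u k = 0 ∧ v k = 0 := by
  have key := kernelA d n hd hn1 hnd a had hdet
    (fun k => (starRingEnd ℂ) (v (2*d-1-k))) (fun k => (starRingEnd ℂ) (u (2*d-1-k)))
    (by
      intro j hj
      have h := congrArg (starRingEnd ℂ) (H2 (2*d-1-j) (by omega))
      rw [map_sum, map_sum] at h
      calc ∑ k ∈ Finset.range (2*d),
            (if k ≤ j ∧ j ≤ k + d then a (d - (j-k)) else 0) * ((starRingEnd ℂ) (v (2*d-1-k)))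
          = ∑ k ∈ Finset.range (2*d), (fun m => (starRingEnd ℂ)
              ((if 2*d-1-j ≤ m ∧ m ≤ 2*d-1-j + d then (starRingEnd ℂ) (a (d - (m-(2*d-1-j)))) else 0) * v m)) (2*d-1-k) := by
            refine Finset.sum_congr rfl fun k hk => ?_
            rw [Finset.mem_range] at hk
            simp only [_root_.map_mul, apply_ite (starRingEnd ℂ), map_zero, Complex.conj_conj]
            by_cases hc : k ≤ j ∧ j ≤ k + d
            · rw [if_pos hc, if_pos (by omega), show 2*d-1-k-(2*d-1-j) = j - k by omega]
            · rw [if_neg hc, if_neg (by omega)]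
        _ = ∑ k ∈ Finset.range (2*d), (starRingEnd ℂ)
              ((if 2*d-1-j ≤ k ∧ k ≤ 2*d-1-j + d then (starRingEnd ℂ) (a (d - (k-(2*d-1-j)))) else 0) * v k) :=
            Finset.sum_range_reflect (fun m => (starRingEnd ℂ)
              ((if 2*d-1-j ≤ m ∧ m ≤ 2*d-1-j + d then (starRingEnd ℂ) (a (d - (m-(2*d-1-j)))) else 0) * v m)) (2*d)
        _ = ∑ k ∈ Finset.range (2*d), (starRingEnd ℂ)
              ((if k < n ∧ k ≤ 2*d-1-j ∧ 2*d-1-j ≤ k + d then a (d - (2*d-1-j-k)) else 0) * u k) := h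
        _ = ∑ k ∈ Finset.range (2*d), (fun m => (starRingEnd ℂ)
              ((if m < n ∧ m ≤ 2*d-1-j ∧ 2*d-1-j ≤ m + d then a (d - (2*d-1-j-m)) else 0) * u m)) (2*d-1-k) :=
            (Finset.sum_range_reflect (fun m => (starRingEnd ℂ)
              ((if m < n ∧ m ≤ 2*d-1-j ∧ 2*d-1-j ≤ m + d then a (d - (2*d-1-j-m)) else 0) * u m)) (2*d)).symm
        _ = _ := by
            refine Finset.sum_congr rfl fun k hk => ?_
            rw [Finset.mem_range] at hk
            simp only [_root_.map_mul, apply_ite (starRingEnd ℂ), map_zero]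
            by_cases hc : 2*d ≤ k + n ∧ k ≤ j + d ∧ j ≤ k
            · rw [if_pos (by omega), if_pos hc, show 2*d-1-j-(2*d-1-k) = k - j by omega]
            · rw [if_neg (by omega), if_neg hc])
    (by
      intro j hj
      have h := congrArg (starRingEnd ℂ) (H1 (2*d-1-j) (by omega))
      rw [map_sum, map_sum] at h
      calc ∑ k ∈ Finset.range (2*d),
            (if j ≤ k ∧ k ≤ j + d then (starRingEnd ℂ) (a (d - (k-j))) else 0) * ((starRingEnd ℂ) (u (2*d-1-k)))
          = ∑ k ∈ Finset.range (2*d), (fun m => (starRingEnd ℂ)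
              ((if m ≤ 2*d-1-j ∧ 2*d-1-j ≤ m + d then a (d - (2*d-1-j-m)) else 0) * u m)) (2*d-1-k) := by
            refine Finset.sum_congr rfl fun k hk => ?_
            rw [Finset.mem_range] at hk
            simp only [_root_.map_mul, apply_ite (starRingEnd ℂ), map_zero]
            by_cases hc : j ≤ k ∧ k ≤ j + d
            · rw [if_pos hc, if_pos (by omega), show 2*d-1-j-(2*d-1-k) = k - j by omega]
            · rw [if_neg hc, if_neg (by omega)]
        _ = ∑ k ∈ Finset.range (2*d), (starRingEnd ℂ)
              ((if k ≤ 2*d-1-j ∧ 2*d-1-j ≤ k + d then a (d - (2*d-1-j-k)) else 0) * u k) :=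
            Finset.sum_range_reflect (fun m => (starRingEnd ℂ)
              ((if m ≤ 2*d-1-j ∧ 2*d-1-j ≤ m + d then a (d - (2*d-1-j-m)) else 0) * u m)) (2*d)
        _ = ∑ k ∈ Finset.range (2*d), (starRingEnd ℂ)
              ((if d ≤ k ∧ k < d + n ∧ k ≤ 2*d-1-j + d ∧ 2*d-1-j ≤ k then (starRingEnd ℂ) (a (d - (k-(2*d-1-j)))) else 0) * v k) := h
        _ = ∑ k ∈ Finset.range (2*d), (fun m => (starRingEnd ℂ)
              ((if d ≤ m ∧ m < d + n ∧ m ≤ 2*d-1-j + d ∧ 2*d-1-j ≤ m then (starRingEnd ℂ) (a (d - (m-(2*d-1-j)))) else 0) * v m)) (2*d-1-k) :=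
            (Finset.sum_range_reflect (fun m => (starRingEnd ℂ)
              ((if d ≤ m ∧ m < d + n ∧ m ≤ 2*d-1-j + d ∧ 2*d-1-j ≤ m then (starRingEnd ℂ) (a (d - (m-(2*d-1-j)))) else 0) * v m)) (2*d)).symm
        _ = _ := by
            refine Finset.sum_congr rfl fun k hk => ?_
            rw [Finset.mem_range] at hk
            simp only [_root_.map_mul, apply_ite (starRingEnd ℂ), map_zero, Complex.conj_conj]
            by_cases hc : d ≤ k + n ∧ k < d ∧ k ≤ j ∧ j ≤ k + d
            · rw [if_pos (by omega), if_pos hc, show 2*d-1-k-(2*d-1-j) = j - k by omega]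
            · rw [if_neg (by omega), if_neg hc])
  intro k hk
  have h1 := (key (2*d-1-k) (by omega)).1
  have h2 := (key (2*d-1-k) (by omega)).2
  rw [show 2*d-1-(2*d-1-k) = k by omega] at h1 h2
  constructor
  · have := congrArg (starRingEnd ℂ) h2
    rwa [Complex.conj_conj, map_zero] at this
  · have := congrArg (starRingEnd ℂ) h1
    rwa [Complex.conj_conj, map_zero] at this


lemma rd_eq (d : ℕ) : rv d * (d:ℤ) = 2 * Lv d := by
  unfold rv Lv
  by_cases h : Even d
  · rw [if_pos h, if_pos h, one_mul]
    obtain ⟨c, hc⟩ := h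
    subst hc
    push_cast
    omega
  · rw [if_neg h, if_neg h]

lemma tr0 (d : ℕ) (C : ℤ → ℂ) (m : ℕ) (hm : m ≤ d) :
    C (-(Lv d) + rv d * (m:ℤ)) = coeffC d C (d - m) := by
  unfold coeffC
  congr 1
  have h1 : ((d - m : ℕ) : ℤ) = (d:ℤ) - m := by omega
  rw [h1, mul_sub, rd_eq]
  ring

lemma tr1 (d : ℕ) (C : ℤ → ℂ) (j k : ℕ) (h1 : j ≤ k) (h2 : k ≤ j + d) :
    C (Lv d - rv d * ((j:ℤ) - (k:ℤ) + d)) = coeffC d C (d - (k - j)) := by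
  unfold coeffC
  congr 1
  have : ((d - (k - j) : ℕ) : ℤ) = (j:ℤ) - (k:ℤ) + d := by omega
  rw [this]

lemma JAJ (d : ℕ) (hd : 0 < d) (A : Matrix (Fin (2*d)) (Fin (2*d)) ℂ) (j k : Fin (2*d)) :
    (Jmat d * A * Jmat d) j k
      = A ⟨2*d-1-(j:ℕ), by omega⟩ ⟨2*d-1-(k:ℕ), by omega⟩ := by
  have hj := j.isLt
  have hk := k.isLt
  rw [Matrix.mul_apply]
  rw [Finset.sum_eq_single (⟨2*d-1-(k:ℕ), by omega⟩ : Fin (2*d))]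
  · have : Jmat d (⟨2*d-1-(k:ℕ), by omega⟩ : Fin (2*d)) k = 1 := by
      rw [Jmat, Matrix.of_apply, if_pos (show 2*d-1-(k:ℕ) + (k:ℕ) + 1 = 2*d by omega)]
    rw [this, mul_one, Matrix.mul_apply]
    rw [Finset.sum_eq_single (⟨2*d-1-(j:ℕ), by omega⟩ : Fin (2*d))]
    · have : Jmat d j (⟨2*d-1-(j:ℕ), by omega⟩ : Fin (2*d)) = 1 := by
        rw [Jmat, Matrix.of_apply, if_pos (show (j:ℕ) + (2*d-1-(j:ℕ)) + 1 = 2*d by omega)]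
      rw [this, one_mul]
    · intro s _ hne
      have hs : (s:ℕ) ≠ 2*d-1-(j:ℕ) := fun h => hne (Fin.ext h)
      rw [Jmat, Matrix.of_apply, if_neg (show ¬((j:ℕ) + (s:ℕ) + 1 = 2*d) by omega), zero_mul]
    · intro h; exact absurd (Finset.mem_univ _) h
  · intro t _ hne
    have ht : (t:ℕ) ≠ 2*d-1-(k:ℕ) := fun h => hne (Fin.ext h)
    rw [Jmat, Matrix.of_apply, if_neg (show ¬((t:ℕ) + (k:ℕ) + 1 = 2*d) by omega), mul_zero]
  · intro h; exact absurd (Finset.mem_univ _) h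

section Test
variable (d n : ℕ) (C : ℤ → ℂ)

def sgn : Fin 4 → ℂ := fun t => if (t:ℕ) = 0 ∨ (t:ℕ) = 3 then 1 else -1

lemma fv0 : ((0:Fin 4):ℕ) = 0 := rfl
lemma fv1 : ((1:Fin 4):ℕ) = 1 := rfl
lemma fv2 : ((2:Fin 4):ℕ) = 2 := rfl
lemma fv3 : ((3:Fin 4):ℕ) = 3 := rfl

lemma hE0s (p q : Fin 4 × Fin (2*d)) :
    bigE0 d C p q * sgn q.1 = sgn p.1 * bigE0 d C p q := by
  by_cases h : p.1 = q.1
  · rw [h, mul_comm]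
  · have h0 : bigE0 d C p q = 0 := by
      rw [bigE0, Matrix.of_apply, if_neg h]
    rw [h0, zero_mul, mul_zero]

lemma hEss (p q : Fin 4 × Fin (2*d)) :
    bigEsharp d n C p q * sgn q.1 = -(sgn p.1 * bigEsharp d n C p q) := by
  rw [bigEsharp, Matrix.of_apply]
  split_ifs with h1 h2 h3 h4
  · rw [h1.1, h1.2]; norm_num [sgn, fv0, fv1, fv2, fv3]
  · rw [h2.1, h2.2]; norm_num [sgn, fv0, fv1, fv2, fv3]
  · rw [h3.1, h3.2]; norm_num [sgn, fv0, fv1, fv2, fv3]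
  · rw [h4.1, h4.2]; norm_num [sgn, fv0, fv1, fv2, fv3]
  · simp


lemma hbz (p : Fin 4 × Fin (2*d)) (hp : p.1 = 1 ∨ p.1 = 2) :
    (bigE0 d C).mulVec (chiVec d) p = 0 := by
  rw [Matrix.mulVec, dotProduct]
  refine Finset.sum_eq_zero fun q _ => ?_
  by_cases h : p.1 = q.1
  · have : chiVec d q = 0 := by
      rw [chiVec, if_neg]
      rintro (⟨h0, -⟩ | ⟨h0, -⟩) <;>
        · rw [h0] at h
          rcases hp with hp | hp <;> rw [hp] at h <;> exact absurd h (by decide)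
    rw [this, mul_zero]
  · have : bigE0 d C p q = 0 := by rw [bigE0, Matrix.of_apply, if_neg h]
    rw [this, zero_mul]

lemma hcz (p : Fin 4 × Fin (2*d)) (hp : p.1 = 0 ∨ p.1 = 3) :
    (bigJ d).mulVec ((bigE0 d C).mulVec (chiVec d)) p = 0 := by
  rw [Matrix.mulVec, dotProduct]
  rcases hp with hp | hp
  · rw [Finset.sum_eq_single ((2 : Fin 4), p.2)]
    · rw [bigJ, Matrix.of_apply, if_pos ⟨by rw [hp]; rfl, rfl⟩, one_mul]
      exact hbz d C _ (Or.inr rfl)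
    · intro q _ hne
      rw [bigJ, Matrix.of_apply, if_neg, zero_mul]
      rintro ⟨ha, hb⟩
      refine hne (Prod.ext (Fin.ext ?_) hb.symm)
      rw [hp] at ha
      exact ha.symm
    · intro h; exact absurd (Finset.mem_univ _) h
  · rw [Finset.sum_eq_single ((1 : Fin 4), p.2)]
    · rw [bigJ, Matrix.of_apply, if_pos ⟨by rw [hp]; rfl, rfl⟩, one_mul]
      exact hbz d C _ (Or.inl rfl)
    · intro q _ hne
      rw [bigJ, Matrix.of_apply, if_neg, zero_mul]
      rintro ⟨ha, hb⟩
      refine hne (Prod.ext (Fin.ext ?_) hb.symm)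
      rw [hp] at ha
      exact ha.symm
    · intro h; exact absurd (Finset.mem_univ _) h


lemma bEs_zero (r r' : Fin 4) (i k : Fin (2*d))
    (h1 : ¬(r = 0 ∧ r' = 2)) (h2 : ¬(r = 1 ∧ r' = 3))
    (h3 : ¬(r = 2 ∧ r' = 0)) (h4 : ¬(r = 3 ∧ r' = 1)) :
    bigEsharp d n C (r,i) (r',k) = 0 := by
  rw [bigEsharp, Matrix.of_apply, if_neg h1, if_neg h2, if_neg h3, if_neg h4]

lemma bE0_zero (r r' : Fin 4) (i k : Fin (2*d)) (h : ¬(r = r')) :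
    bigE0 d C (r,i) (r',k) = 0 := by
  rw [bigE0, Matrix.of_apply, if_neg h]

lemma sgn0 : sgn 0 = 1 := rfl
lemma sgn1 : sgn 1 = -1 := rfl
lemma sgn2 : sgn 2 = -1 := rfl
lemma sgn3 : sgn 3 = 1 := rfl

lemma finsum_to_range {N : ℕ} (F : Fin N → ℂ) (f : ℕ → ℂ)
    (h : ∀ k : Fin N, F k = f (k:ℕ)) : ∑ k : Fin N, F k = ∑ k ∈ Finset.range N, f k :=
  (Finset.sum_congr rfl fun k _ => h k).trans (Fin.sum_univ_eq_sum_range f N)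

lemma keyeq (d : ℕ) (hd : 0 < d) (C : ℤ → ℂ)
    (n : ℕ) (hn1 : 1 ≤ n) (hnd : n ≤ d)
    (Φp Φm : Fin 4 × Fin (2 * d) → ℂ)
    (hΦp : (bigE0 d C + bigEsharp d n C).mulVec Φp
      = (bigE0 d C).mulVec (chiVec d) - (bigJ d).mulVec ((bigE0 d C).mulVec (chiVec d)))
    (hΦm : (bigE0 d C - bigEsharp d n C).mulVec Φm
      = (bigE0 d C).mulVec (chiVec d) + (bigJ d).mulVec ((bigE0 d C).mulVec (chiVec d))) :
    ∀ p : Fin 4 × Fin (2*d),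
      ∑ q : Fin 4 × Fin (2*d), (bigE0 d C p q - bigEsharp d n C p q) * (sgn q.1 * Φp q - Φm q) = 0 := by
  intro p
  have e1 : ∀ q, (bigE0 d C p q - bigEsharp d n C p q) * (sgn q.1 * Φp q - Φm q)
      = sgn p.1 * ((bigE0 d C p q + bigEsharp d n C p q) * Φp q)
        - (bigE0 d C p q - bigEsharp d n C p q) * Φm q := by
    intro q
    have h1 := hE0s d C p q
    have h2 := hEss d n C p q
    linear_combination (Φp q) * h1 - (Φp q) * h2
  rw [Finset.sum_congr rfl fun q _ => e1 q, Finset.sum_sub_distrib, ← Finset.mul_sum]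
  have hp1 : ∑ q : Fin 4 × Fin (2*d), (bigE0 d C p q + bigEsharp d n C p q) * Φp q
      = (bigE0 d C).mulVec (chiVec d) p - (bigJ d).mulVec ((bigE0 d C).mulVec (chiVec d)) p := by
    have := congrFun hΦp p
    rw [Matrix.mulVec, dotProduct] at this
    simp only [Matrix.add_apply] at this
    rw [this, Pi.sub_apply]
  have hp2 : ∑ q : Fin 4 × Fin (2*d), (bigE0 d C p q - bigEsharp d n C p q) * Φm q
      = (bigE0 d C).mulVec (chiVec d) p + (bigJ d).mulVec ((bigE0 d C).mulVec (chiVec d)) p := by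
    have := congrFun hΦm p
    rw [Matrix.mulVec, dotProduct] at this
    simp only [Matrix.sub_apply] at this
    rw [this, Pi.add_apply]
  rw [hp1, hp2]
  have hv : (p.1:ℕ) = 0 ∨ (p.1:ℕ) = 1 ∨ (p.1:ℕ) = 2 ∨ (p.1:ℕ) = 3 := by
    have := p.1.isLt; omega
  rcases hv with h|h|h|h
  · have h0 : p.1 = 0 := Fin.ext h
    rw [hcz d C p (Or.inl h0), h0, sgn0]; ring
  · have h0 : p.1 = 1 := Fin.ext h
    rw [hbz d C p (Or.inl h0), h0, sgn1]; ring
  · have h0 : p.1 = 2 := Fin.ext h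
    rw [hbz d C p (Or.inr h0), h0, sgn2]; ring
  · have h0 : p.1 = 3 := Fin.ext h
    rw [hcz d C p (Or.inr h0), h0, sgn3]; ring
lemma trmk (d : ℕ) (C : ℤ → ℂ) (j k : ℕ) (hj : j < 2*d) (hk : k < 2*d)
    (h1 : k ≤ j) (h2 : j ≤ k + d) :
    C (Lv d - rv d * (((2*d-1-j : ℕ):ℤ) - ((2*d-1-k : ℕ):ℤ) + d)) = coeffC d C (d - (j - k)) := by
  unfold coeffC
  congr 1
  have h : ((2*d-1-j : ℕ):ℤ) - ((2*d-1-k:ℕ):ℤ) + d = ((d - (j-k) : ℕ):ℤ) := by omega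
  rw [h]

lemma rowA1 (d n : ℕ) (hd : 0 < d) (hnd : n ≤ d) (C : ℤ → ℂ) (Δ : Fin 4 × Fin (2*d) → ℂ)
    (hkey : ∀ p, ∑ q : Fin 4 × Fin (2*d), (bigE0 d C p q - bigEsharp d n C p q) * Δ q = 0)
    (i : Fin (2*d)) :
    ∑ k ∈ Finset.range (2*d),
        (if k ≤ (i:ℕ) ∧ (i:ℕ) ≤ k + d then coeffC d C (d - ((i:ℕ)-k)) else 0) *
          ((fun m => if h : m < 2*d then Δ (0, ⟨m,h⟩) else 0) k)
      = ∑ k ∈ Finset.range (2*d),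
        (if 2*d ≤ k + n ∧ k ≤ (i:ℕ) + d ∧ (i:ℕ) ≤ k then (starRingEnd ℂ) (coeffC d C (d - (k-(i:ℕ)))) else 0) *
          ((fun m => if h : m < 2*d then Δ (2, ⟨m,h⟩) else 0) k) := by
  have h := hkey (0, i)
  simp only [Fintype.sum_prod_type, Fin.sum_univ_four] at h
  have z1 : ∑ y : Fin (2*d), (bigE0 d C (0,i) (1,y) - bigEsharp d n C (0,i) (1,y)) * Δ (1,y) = 0 :=
    Finset.sum_eq_zero fun y _ => by
      rw [bE0_zero d C 0 1 _ _ (by decide),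
        bEs_zero d n C 0 1 _ _ (by decide) (by decide) (by decide) (by decide), sub_zero, zero_mul]
  have z3 : ∑ y : Fin (2*d), (bigE0 d C (0,i) (3,y) - bigEsharp d n C (0,i) (3,y)) * Δ (3,y) = 0 :=
    Finset.sum_eq_zero fun y _ => by
      rw [bE0_zero d C 0 3 _ _ (by decide),
        bEs_zero d n C 0 3 _ _ (by decide) (by decide) (by decide) (by decide), sub_zero, zero_mul]
  have t0 : ∑ y : Fin (2*d), (bigE0 d C (0,i) (0,y) - bigEsharp d n C (0,i) (0,y)) * Δ (0,y)
      = ∑ k ∈ Finset.range (2*d),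
        (if k ≤ (i:ℕ) ∧ (i:ℕ) ≤ k + d then coeffC d C (d - ((i:ℕ)-k)) else 0) *
          ((fun m => if h : m < 2*d then Δ (0, ⟨m,h⟩) else 0) k) := by
    refine finsum_to_range _ _ fun k => ?_
    rw [bEs_zero d n C 0 0 _ _ (by decide) (by decide) (by decide) (by decide), sub_zero]
    rw [bigE0, Matrix.of_apply, if_pos rfl, if_pos (by decide : ((0:Fin 4):ℕ) ≤ 1)]
    simp only [dif_pos k.isLt, Fin.eta]
    rw [e0mat, Matrix.of_apply]
    by_cases hc : (k:ℕ) ≤ (i:ℕ) ∧ (i:ℕ) ≤ (k:ℕ) + d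
    · rw [if_pos ⟨hc.1, by omega⟩, if_pos hc, tr0 d C ((i:ℕ) - (k:ℕ)) (by omega)]
    · rw [if_neg (fun hh => hc ⟨hh.1, by omega⟩), if_neg hc]
  have t2 : ∑ y : Fin (2*d), (bigE0 d C (0,i) (2,y) - bigEsharp d n C (0,i) (2,y)) * Δ (2,y)
      = -∑ k ∈ Finset.range (2*d),
        (if 2*d ≤ k + n ∧ k ≤ (i:ℕ) + d ∧ (i:ℕ) ≤ k then (starRingEnd ℂ) (coeffC d C (d - (k-(i:ℕ)))) else 0) *
          ((fun m => if h : m < 2*d then Δ (2, ⟨m,h⟩) else 0) k) := by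
    refine (finsum_to_range _ (fun k =>
      -((if 2*d ≤ k + n ∧ k ≤ (i:ℕ) + d ∧ (i:ℕ) ≤ k then (starRingEnd ℂ) (coeffC d C (d - (k-(i:ℕ)))) else 0) *
        ((fun m => if h : m < 2*d then Δ (2, ⟨m,h⟩) else 0) k))) (fun k => ?_)).trans
      (Finset.sum_neg_distrib _)
    rw [bE0_zero d C 0 2 _ _ (by decide), zero_sub, neg_mul, neg_inj]
    rw [bigEsharp, Matrix.of_apply, if_pos ⟨rfl, rfl⟩, Matrix.map_apply]
    simp only [dif_pos k.isLt, Fin.eta]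
    rw [e2mat, Matrix.of_apply, apply_ite (starRingEnd ℂ), map_zero]
    by_cases hc : 2*d ≤ (k:ℕ) + n ∧ (k:ℕ) ≤ (i:ℕ) + d ∧ (i:ℕ) ≤ (k:ℕ)
    · rw [if_pos hc, if_pos hc, tr1 d C (i:ℕ) (k:ℕ) hc.2.2 hc.2.1]
    · rw [if_neg hc, if_neg hc]
  rw [t0, z1, t2, z3] at h
  linear_combination h

lemma e1mk (d n : ℕ) (C : ℤ → ℂ) (j k : ℕ) (hj : j < 2*d) (hk : k < 2*d) :
    e1mat d n C ⟨j, hj⟩ ⟨k, hk⟩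
      = if d ≤ k ∧ k + 1 ≤ d + n ∧ k ≤ j + d ∧ j ≤ k then
          C (Lv d - rv d * ((j:ℤ) - (k:ℤ) + d)) else 0 := rfl

lemma e2mk (d n : ℕ) (C : ℤ → ℂ) (j k : ℕ) (hj : j < 2*d) (hk : k < 2*d) :
    e2mat d n C ⟨j, hj⟩ ⟨k, hk⟩
      = if 2*d ≤ k + n ∧ k ≤ j + d ∧ j ≤ k then
          C (Lv d - rv d * ((j:ℤ) - (k:ℤ) + d)) else 0 := rfl

lemma rowA2 (d n : ℕ) (hd : 0 < d) (hnd : n ≤ d) (C : ℤ → ℂ) (Δ : Fin 4 × Fin (2*d) → ℂ)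
    (hkey : ∀ p, ∑ q : Fin 4 × Fin (2*d), (bigE0 d C p q - bigEsharp d n C p q) * Δ q = 0)
    (i : Fin (2*d)) :
    ∑ k ∈ Finset.range (2*d),
        (if (i:ℕ) ≤ k ∧ k ≤ (i:ℕ) + d then (starRingEnd ℂ) (coeffC d C (d - (k-(i:ℕ)))) else 0) *
          ((fun m => if h : m < 2*d then Δ (2, ⟨m,h⟩) else 0) k)
      = ∑ k ∈ Finset.range (2*d),
        (if d ≤ k + n ∧ k < d ∧ k ≤ (i:ℕ) ∧ (i:ℕ) ≤ k + d then coeffC d C (d - ((i:ℕ)-k)) else 0) *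
          ((fun m => if h : m < 2*d then Δ (0, ⟨m,h⟩) else 0) k) := by
  have h := hkey (2, i)
  simp only [Fintype.sum_prod_type, Fin.sum_univ_four] at h
  have z1 : ∑ y : Fin (2*d), (bigE0 d C (2,i) (1,y) - bigEsharp d n C (2,i) (1,y)) * Δ (1,y) = 0 :=
    Finset.sum_eq_zero fun y _ => by
      rw [bE0_zero d C 2 1 _ _ (by decide),
        bEs_zero d n C 2 1 _ _ (by decide) (by decide) (by decide) (by decide), sub_zero, zero_mul]
  have z3 : ∑ y : Fin (2*d), (bigE0 d C (2,i) (3,y) - bigEsharp d n C (2,i) (3,y)) * Δ (3,y) = 0 :=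
    Finset.sum_eq_zero fun y _ => by
      rw [bE0_zero d C 2 3 _ _ (by decide),
        bEs_zero d n C 2 3 _ _ (by decide) (by decide) (by decide) (by decide), sub_zero, zero_mul]
  have t2 : ∑ y : Fin (2*d), (bigE0 d C (2,i) (2,y) - bigEsharp d n C (2,i) (2,y)) * Δ (2,y)
      = ∑ k ∈ Finset.range (2*d),
        (if (i:ℕ) ≤ k ∧ k ≤ (i:ℕ) + d then (starRingEnd ℂ) (coeffC d C (d - (k-(i:ℕ)))) else 0) *
          ((fun m => if h : m < 2*d then Δ (2, ⟨m,h⟩) else 0) k) := by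
    refine finsum_to_range _ _ fun k => ?_
    rw [bEs_zero d n C 2 2 _ _ (by decide) (by decide) (by decide) (by decide), sub_zero]
    rw [bigE0, Matrix.of_apply, if_pos rfl, if_neg (by decide : ¬((2:Fin 4):ℕ) ≤ 1)]
    simp only [dif_pos k.isLt, Fin.eta]
    rw [Matrix.conjTranspose_apply, e0mat, Matrix.of_apply, apply_ite (star : ℂ → ℂ), star_zero]
    by_cases hc : (i:ℕ) ≤ (k:ℕ) ∧ (k:ℕ) ≤ (i:ℕ) + d
    · rw [if_pos ⟨hc.1, by omega⟩, if_pos hc, tr0 d C ((k:ℕ) - (i:ℕ)) (by omega), starRingEnd_apply]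
    · rw [if_neg (fun hh => hc ⟨hh.1, by omega⟩), if_neg hc]
  have t0 : ∑ y : Fin (2*d), (bigE0 d C (2,i) (0,y) - bigEsharp d n C (2,i) (0,y)) * Δ (0,y)
      = -∑ k ∈ Finset.range (2*d),
        (if d ≤ k + n ∧ k < d ∧ k ≤ (i:ℕ) ∧ (i:ℕ) ≤ k + d then coeffC d C (d - ((i:ℕ)-k)) else 0) *
          ((fun m => if h : m < 2*d then Δ (0, ⟨m,h⟩) else 0) k) := by
    refine (finsum_to_range _ (fun k =>
      -((if d ≤ k + n ∧ k < d ∧ k ≤ (i:ℕ) ∧ (i:ℕ) ≤ k + d then coeffC d C (d - ((i:ℕ)-k)) else 0) *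
        ((fun m => if h : m < 2*d then Δ (0, ⟨m,h⟩) else 0) k))) (fun k => ?_)).trans
      (Finset.sum_neg_distrib _)
    rw [bE0_zero d C 2 0 _ _ (by decide), zero_sub, neg_mul, neg_inj]
    rw [bigEsharp, Matrix.of_apply, if_neg (fun hh => absurd hh.1 (by decide : ¬((2:Fin 4) = 0))),
      if_neg (fun hh => absurd hh.1 (by decide : ¬((2:Fin 4) = 1))), if_pos ⟨rfl, rfl⟩]
    rw [JAJ d hd (e1mat d n C) i k, e1mk d n C (2*d-1-(i:ℕ)) (2*d-1-(k:ℕ)) (by omega) (by omega)]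
    simp only [dif_pos k.isLt, Fin.eta]
    have hiv := i.isLt
    have hkv := k.isLt
    by_cases hc : d ≤ (k:ℕ) + n ∧ (k:ℕ) < d ∧ (k:ℕ) ≤ (i:ℕ) ∧ (i:ℕ) ≤ (k:ℕ) + d
    · rw [if_pos (by omega), if_pos hc,
        trmk d C (i:ℕ) (k:ℕ) hiv hkv hc.2.2.1 hc.2.2.2]
    · rw [if_neg (by omega), if_neg hc]
  rw [t0, z1, t2, z3] at h
  linear_combination h

lemma rowB1 (d n : ℕ) (hd : 0 < d) (hnd : n ≤ d) (C : ℤ → ℂ) (Δ : Fin 4 × Fin (2*d) → ℂ)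
    (hkey : ∀ p, ∑ q : Fin 4 × Fin (2*d), (bigE0 d C p q - bigEsharp d n C p q) * Δ q = 0)
    (i : Fin (2*d)) :
    ∑ k ∈ Finset.range (2*d),
        (if k ≤ (i:ℕ) ∧ (i:ℕ) ≤ k + d then coeffC d C (d - ((i:ℕ)-k)) else 0) *
          ((fun m => if h : m < 2*d then Δ (1, ⟨m,h⟩) else 0) k)
      = ∑ k ∈ Finset.range (2*d),
        (if d ≤ k ∧ k < d + n ∧ k ≤ (i:ℕ) + d ∧ (i:ℕ) ≤ k then (starRingEnd ℂ) (coeffC d C (d - (k-(i:ℕ)))) else 0) *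
          ((fun m => if h : m < 2*d then Δ (3, ⟨m,h⟩) else 0) k) := by
  have h := hkey (1, i)
  simp only [Fintype.sum_prod_type, Fin.sum_univ_four] at h
  have z0 : ∑ y : Fin (2*d), (bigE0 d C (1,i) (0,y) - bigEsharp d n C (1,i) (0,y)) * Δ (0,y) = 0 :=
    Finset.sum_eq_zero fun y _ => by
      rw [bE0_zero d C 1 0 _ _ (by decide),
        bEs_zero d n C 1 0 _ _ (by decide) (by decide) (by decide) (by decide), sub_zero, zero_mul]
  have z2 : ∑ y : Fin (2*d), (bigE0 d C (1,i) (2,y) - bigEsharp d n C (1,i) (2,y)) * Δ (2,y) = 0 :=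
    Finset.sum_eq_zero fun y _ => by
      rw [bE0_zero d C 1 2 _ _ (by decide),
        bEs_zero d n C 1 2 _ _ (by decide) (by decide) (by decide) (by decide), sub_zero, zero_mul]
  have t1 : ∑ y : Fin (2*d), (bigE0 d C (1,i) (1,y) - bigEsharp d n C (1,i) (1,y)) * Δ (1,y)
      = ∑ k ∈ Finset.range (2*d),
        (if k ≤ (i:ℕ) ∧ (i:ℕ) ≤ k + d then coeffC d C (d - ((i:ℕ)-k)) else 0) *
          ((fun m => if h : m < 2*d then Δ (1, ⟨m,h⟩) else 0) k) := by
    refine finsum_to_range _ _ fun k => ?_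
    rw [bEs_zero d n C 1 1 _ _ (by decide) (by decide) (by decide) (by decide), sub_zero]
    rw [bigE0, Matrix.of_apply, if_pos rfl, if_pos (by decide : ((1:Fin 4):ℕ) ≤ 1)]
    simp only [dif_pos k.isLt, Fin.eta]
    rw [e0mat, Matrix.of_apply]
    by_cases hc : (k:ℕ) ≤ (i:ℕ) ∧ (i:ℕ) ≤ (k:ℕ) + d
    · rw [if_pos ⟨hc.1, by omega⟩, if_pos hc, tr0 d C ((i:ℕ) - (k:ℕ)) (by omega)]
    · rw [if_neg (fun hh => hc ⟨hh.1, by omega⟩), if_neg hc]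
  have t3 : ∑ y : Fin (2*d), (bigE0 d C (1,i) (3,y) - bigEsharp d n C (1,i) (3,y)) * Δ (3,y)
      = -∑ k ∈ Finset.range (2*d),
        (if d ≤ k ∧ k < d + n ∧ k ≤ (i:ℕ) + d ∧ (i:ℕ) ≤ k then (starRingEnd ℂ) (coeffC d C (d - (k-(i:ℕ)))) else 0) *
          ((fun m => if h : m < 2*d then Δ (3, ⟨m,h⟩) else 0) k) := by
    refine (finsum_to_range _ (fun k =>
      -((if d ≤ k ∧ k < d + n ∧ k ≤ (i:ℕ) + d ∧ (i:ℕ) ≤ k then (starRingEnd ℂ) (coeffC d C (d - (k-(i:ℕ)))) else 0) *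
        ((fun m => if h : m < 2*d then Δ (3, ⟨m,h⟩) else 0) k))) (fun k => ?_)).trans
      (Finset.sum_neg_distrib _)
    rw [bE0_zero d C 1 3 _ _ (by decide), zero_sub, neg_mul, neg_inj]
    rw [bigEsharp, Matrix.of_apply, if_neg (fun hh => absurd hh.1 (by decide : ¬((1:Fin 4) = 0))),
      if_pos ⟨rfl, rfl⟩, Matrix.map_apply]
    simp only [dif_pos k.isLt, Fin.eta]
    rw [e1mat, Matrix.of_apply, apply_ite (starRingEnd ℂ), map_zero]
    by_cases hc : d ≤ (k:ℕ) ∧ (k:ℕ) < d + n ∧ (k:ℕ) ≤ (i:ℕ) + d ∧ (i:ℕ) ≤ (k:ℕ)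
    · rw [if_pos (by omega), if_pos hc, tr1 d C (i:ℕ) (k:ℕ) hc.2.2.2 hc.2.2.1]
    · rw [if_neg (by omega), if_neg hc]
  rw [t1, z0, t3, z2] at h
  linear_combination h

lemma rowB2 (d n : ℕ) (hd : 0 < d) (hnd : n ≤ d) (C : ℤ → ℂ) (Δ : Fin 4 × Fin (2*d) → ℂ)
    (hkey : ∀ p, ∑ q : Fin 4 × Fin (2*d), (bigE0 d C p q - bigEsharp d n C p q) * Δ q = 0)
    (i : Fin (2*d)) :
    ∑ k ∈ Finset.range (2*d),
        (if (i:ℕ) ≤ k ∧ k ≤ (i:ℕ) + d then (starRingEnd ℂ) (coeffC d C (d - (k-(i:ℕ)))) else 0) *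
          ((fun m => if h : m < 2*d then Δ (3, ⟨m,h⟩) else 0) k)
      = ∑ k ∈ Finset.range (2*d),
        (if k < n ∧ k ≤ (i:ℕ) ∧ (i:ℕ) ≤ k + d then coeffC d C (d - ((i:ℕ)-k)) else 0) *
          ((fun m => if h : m < 2*d then Δ (1, ⟨m,h⟩) else 0) k) := by
  have h := hkey (3, i)
  simp only [Fintype.sum_prod_type, Fin.sum_univ_four] at h
  have z0 : ∑ y : Fin (2*d), (bigE0 d C (3,i) (0,y) - bigEsharp d n C (3,i) (0,y)) * Δ (0,y) = 0 :=
    Finset.sum_eq_zero fun y _ => by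
      rw [bE0_zero d C 3 0 _ _ (by decide),
        bEs_zero d n C 3 0 _ _ (by decide) (by decide) (by decide) (by decide), sub_zero, zero_mul]
  have z2 : ∑ y : Fin (2*d), (bigE0 d C (3,i) (2,y) - bigEsharp d n C (3,i) (2,y)) * Δ (2,y) = 0 :=
    Finset.sum_eq_zero fun y _ => by
      rw [bE0_zero d C 3 2 _ _ (by decide),
        bEs_zero d n C 3 2 _ _ (by decide) (by decide) (by decide) (by decide), sub_zero, zero_mul]
  have t3 : ∑ y : Fin (2*d), (bigE0 d C (3,i) (3,y) - bigEsharp d n C (3,i) (3,y)) * Δ (3,y)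
      = ∑ k ∈ Finset.range (2*d),
        (if (i:ℕ) ≤ k ∧ k ≤ (i:ℕ) + d then (starRingEnd ℂ) (coeffC d C (d - (k-(i:ℕ)))) else 0) *
          ((fun m => if h : m < 2*d then Δ (3, ⟨m,h⟩) else 0) k) := by
    refine finsum_to_range _ _ fun k => ?_
    rw [bEs_zero d n C 3 3 _ _ (by decide) (by decide) (by decide) (by decide), sub_zero]
    rw [bigE0, Matrix.of_apply, if_pos rfl, if_neg (by decide : ¬((3:Fin 4):ℕ) ≤ 1)]
    simp only [dif_pos k.isLt, Fin.eta]
    rw [Matrix.conjTranspose_apply, e0mat, Matrix.of_apply, apply_ite (star : ℂ → ℂ), star_zero]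
    by_cases hc : (i:ℕ) ≤ (k:ℕ) ∧ (k:ℕ) ≤ (i:ℕ) + d
    · rw [if_pos ⟨hc.1, by omega⟩, if_pos hc, tr0 d C ((k:ℕ) - (i:ℕ)) (by omega), starRingEnd_apply]
    · rw [if_neg (fun hh => hc ⟨hh.1, by omega⟩), if_neg hc]
  have t1 : ∑ y : Fin (2*d), (bigE0 d C (3,i) (1,y) - bigEsharp d n C (3,i) (1,y)) * Δ (1,y)
      = -∑ k ∈ Finset.range (2*d),
        (if k < n ∧ k ≤ (i:ℕ) ∧ (i:ℕ) ≤ k + d then coeffC d C (d - ((i:ℕ)-k)) else 0) *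
          ((fun m => if h : m < 2*d then Δ (1, ⟨m,h⟩) else 0) k) := by
    refine (finsum_to_range _ (fun k =>
      -((if k < n ∧ k ≤ (i:ℕ) ∧ (i:ℕ) ≤ k + d then coeffC d C (d - ((i:ℕ)-k)) else 0) *
        ((fun m => if h : m < 2*d then Δ (1, ⟨m,h⟩) else 0) k))) (fun k => ?_)).trans
      (Finset.sum_neg_distrib _)
    rw [bE0_zero d C 3 1 _ _ (by decide), zero_sub, neg_mul, neg_inj]
    rw [bigEsharp, Matrix.of_apply, if_neg (fun hh => absurd hh.1 (by decide : ¬((3:Fin 4) = 0))),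
      if_neg (fun hh => absurd hh.1 (by decide : ¬((3:Fin 4) = 1))),
      if_neg (fun hh => absurd hh.1 (by decide : ¬((3:Fin 4) = 2))), if_pos ⟨rfl, rfl⟩]
    rw [JAJ d hd (e2mat d n C) i k, e2mk d n C (2*d-1-(i:ℕ)) (2*d-1-(k:ℕ)) (by omega) (by omega)]
    simp only [dif_pos k.isLt, Fin.eta]
    have hiv := i.isLt
    have hkv := k.isLt
    by_cases hc : (k:ℕ) < n ∧ (k:ℕ) ≤ (i:ℕ) ∧ (i:ℕ) ≤ (k:ℕ) + d
    · rw [if_pos (by omega), if_pos hc,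
        trmk d C (i:ℕ) (k:ℕ) hiv hkv hc.2.1 hc.2.2]
    · rw [if_neg (by omega), if_neg hc]
  rw [t1, z0, t3, z2] at h
  linear_combination h

end Test

/-- Lemma 3.7: the first `2d` entries of `Φ_n^+` and `Φ_n^-` coincide, and the next `2d`
entries are negatives of each other. -/
theorem Phi_plus_eq_Phi_minus_on_blocks
    (d : ℕ) (hd : 0 < d) (C : ℤ → ℂ) (hC : C (Lv d) * C (-(Lv d)) ≠ 0)
    (n : ℕ) (hn1 : 1 ≤ n) (hnd : n ≤ d) (hD : SCD d C n ≠ 0)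
    (Φp Φm : Fin 4 × Fin (2 * d) → ℂ)
    (hΦp : (bigE0 d C + bigEsharp d n C).mulVec Φp
      = (bigE0 d C).mulVec (chiVec d) - (bigJ d).mulVec ((bigE0 d C).mulVec (chiVec d)))
    (hΦm : (bigE0 d C - bigEsharp d n C).mulVec Φm
      = (bigE0 d C).mulVec (chiVec d) + (bigJ d).mulVec ((bigE0 d C).mulVec (chiVec d))) :
    ∀ i : Fin (2 * d), Φp (0, i) = Φm (0, i) ∧ Φp (1, i) = -Φm (1, i) := by
  have had : coeffC d C d ≠ 0 := by
    have h1 : coeffC d C d = C (-(Lv d)) := by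
      unfold coeffC
      congr 1
      have := rd_eq d
      omega
    rw [h1]
    intro h
    exact hC (by rw [h, mul_zero])
  have hdet : (SCL (coeffC d C) d n 1).det ≠ 0 := by
    have h1 : SCD d C n = (SCL (coeffC d C) d n 1).det := by
      rw [SCD, if_neg (by omega)]
    rwa [h1] at hD
  have hkey := keyeq d hd C n hn1 hnd Φp Φm hΦp hΦm
  have resA := kernelA d n hd hn1 hnd (coeffC d C) had hdet
    (fun m => if h : m < 2*d then sgn (0, (⟨m,h⟩ : Fin (2*d))).1 * Φp (0, ⟨m,h⟩) - Φm (0, ⟨m,h⟩) else 0)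
    (fun m => if h : m < 2*d then sgn (2, (⟨m,h⟩ : Fin (2*d))).1 * Φp (2, ⟨m,h⟩) - Φm (2, ⟨m,h⟩) else 0)
    (fun j hj => rowA1 d n hd hnd C (fun q => sgn q.1 * Φp q - Φm q) hkey ⟨j, hj⟩)
    (fun j hj => rowA2 d n hd hnd C (fun q => sgn q.1 * Φp q - Φm q) hkey ⟨j, hj⟩)
  have resB := kernelB d n hd hn1 hnd (coeffC d C) had hdet
    (fun m => if h : m < 2*d then sgn (1, (⟨m,h⟩ : Fin (2*d))).1 * Φp (1, ⟨m,h⟩) - Φm (1, ⟨m,h⟩) else 0)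
    (fun m => if h : m < 2*d then sgn (3, (⟨m,h⟩ : Fin (2*d))).1 * Φp (3, ⟨m,h⟩) - Φm (3, ⟨m,h⟩) else 0)
    (fun j hj => rowB1 d n hd hnd C (fun q => sgn q.1 * Φp q - Φm q) hkey ⟨j, hj⟩)
    (fun j hj => rowB2 d n hd hnd C (fun q => sgn q.1 * Φp q - Φm q) hkey ⟨j, hj⟩)
  intro i
  constructor
  · have h0 := (resA (i:ℕ) i.isLt).1
    simp only [dif_pos i.isLt, Fin.eta] at h0
    have hs : sgn (0, i).1 = 1 := sgn0
    rw [hs, one_mul, sub_eq_zero] at h0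
    exact h0
  · have h1 := (resB (i:ℕ) i.isLt).1
    simp only [dif_pos i.isLt, Fin.eta] at h1
    have hs : sgn (1, i).1 = -1 := sgn1
    rw [hs] at h1
    linear_combination -h1

end
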